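/- arXiv:1001.4283 — 3 statements merged into one kernel-verified Lean document; each statement's English description precedes it below -/
import Mathlib

section
/- For a bipartition (ρ;σ) of n and a C-distinguished bipartition (μ;ν) ∈ Q_n^C, the following are equivalent: (1) Φ̂^C(Φ^C(ρ;σ)) = (μ;ν); (2) Φ^C(ρ;σ) = Φ^C(μ;ν); (3) (ρ;σ) ≤ (μ;ν), and (μ;ν) is the minimum among all C-distinguished bipartitions (τ;υ) with (ρ;σ) ≤ (τ;υ). -/
open Finset

/-- Partial sum of the first `k` terms of a sequence of naturals. -/
def psum (π : ℕ → ℕ) (k : ℕ) : ℕ := ∑ i ∈ Finset.range k, π i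

/-- A composition of `n`: almost all terms zero, summing to `n`. -/
def IsComposition (n : ℕ) (π : ℕ → ℕ) : Prop :=
  ∃ N, (∀ i, N ≤ i → π i = 0) ∧ psum π N = n

/-- Dominance order: `l` dominates `π`. -/
def Dominates (l π : ℕ → ℕ) : Prop := ∀ k, psum π k ≤ psum l k

/-- A partition: weakly decreasing sequence. -/
def IsPartition (π : ℕ → ℕ) : Prop := ∀ i, π (i + 1) ≤ π i

/-- A quasi-partition: `π i ≥ π (i+2)` for all `i`. -/
def IsQuasiPartition (π : ℕ → ℕ) : Prop := ∀ i, π (i + 2) ≤ π i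

/-- Interleaving of two sequences: `(ρ₁, σ₁, ρ₂, σ₂, …)` (0-indexed). -/
def interleave (ρ σ : ℕ → ℕ) (i : ℕ) : ℕ :=
  if i % 2 = 0 then ρ (i / 2) else σ (i / 2)

/-- A bipartition of `n`: a pair of partitions whose interleaving sums to `n`. -/
def IsBipartition (n : ℕ) (ρ σ : ℕ → ℕ) : Prop :=
  IsPartition ρ ∧ IsPartition σ ∧ IsComposition n (interleave ρ σ)

/-- Interleaved dominance order on bipartitions: `(ρ;σ) ≤ (μ;ν)`. -/
def BiLE (ρ σ μ ν : ℕ → ℕ) : Prop :=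
  Dominates (interleave μ ν) (interleave ρ σ)

/-- The map `Φ^C` on sequences: replace a consecutive pair `2s < 2t`
by `s+t, s+t` (pointwise description; replacements never overlap for
quasi-partitions). -/
def phiC (π : ℕ → ℕ) : ℕ → ℕ
  | 0 => if π 0 < π 1 then (π 0 + π 1) / 2 else π 0
  | (j + 1) =>
      if π (j + 1) < π (j + 2) then (π (j + 1) + π (j + 2)) / 2
      else if π j < π (j + 1) then (π j + π (j + 1)) / 2
      else π (j + 1)

/-- `Φ^C` of a bipartition: apply `phiC` to the doubled interleaving. -/
def PhiC (ρ σ : ℕ → ℕ) : ℕ → ℕ := phiC (fun i => 2 * interleave ρ σ i)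

/-- Membership in `P^C_{2n}`: partition of `2n` with every odd part of even
multiplicity. -/
def IsPC (n : ℕ) (l : ℕ → ℕ) : Prop :=
  IsPartition l ∧ IsComposition (2 * n) l ∧
    ∀ a : ℕ, Odd a → Even ({i | l i = a}.ncard)

/-- C-distinguished: `μ i ≥ ν i - 1` and `ν i ≥ μ (i+1) - 1`. -/
def QC (μ ν : ℕ → ℕ) : Prop :=
  ∀ i, ν i ≤ μ i + 1 ∧ μ (i + 1) ≤ ν i + 1

/-- B-distinguished: `μ i ≥ ν i - 2` and `ν i ≥ μ (i+1)`. -/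
def QB (μ ν : ℕ → ℕ) : Prop :=
  ∀ i, ν i ≤ μ i + 2 ∧ μ (i + 1) ≤ ν i

/-- Special: `μ i ≥ ν i - 1` and `ν i ≥ μ (i+1)`. -/
def QS (μ ν : ℕ → ℕ) : Prop :=
  ∀ i, ν i ≤ μ i + 1 ∧ μ (i + 1) ≤ ν i

/-- The condition defining `Q_n^{B,2}`: `μ i ≥ ν i - 2`. -/
def QB2 (μ ν : ℕ → ℕ) : Prop := ∀ i, ν i ≤ μ i + 2

/-- For an antitone sequence, the starting index of the run of equal values
containing index `i`. -/
noncomputable def runStart (l : ℕ → ℕ) (i : ℕ) : ℕ := {j | l i < l j}.ncard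

/-- The map `Φ̂^C`, pointwise: halve even parts; replace an (even-length)
maximal run of an odd part `2k+1` with `k, k+1, k, k+1, …`. -/
noncomputable def hphiC (l : ℕ → ℕ) (i : ℕ) : ℕ :=
  if Even (l i) then l i / 2
  else if Even (i - runStart l i) then l i / 2 else l i / 2 + 1

/-- Partial sums of an integer sequence. -/
def zsum (π : ℕ → ℤ) (k : ℕ) : ℤ := ∑ i ∈ Finset.range k, π i

/-- Dominance order on integer sequences. -/
def ZDominates (l π : ℕ → ℤ) : Prop := ∀ k, zsum π k ≤ zsum l k

/-- The interleaved integer sequence `(2ρ₁+1, 2σ₁−1, 2ρ₂+1, 2σ₂−1, …)`. -/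
def interB (ρ σ : ℕ → ℕ) (i : ℕ) : ℤ :=
  if i % 2 = 0 then 2 * (ρ (i / 2) : ℤ) + 1 else 2 * (σ (i / 2) : ℤ) - 1

/-- The map `Φ^B` on integer sequences: replace a consecutive pair `s < t`
by `(s+t)/2, (s+t)/2` (pointwise description). -/
def phiB (π : ℕ → ℤ) : ℕ → ℤ
  | 0 => if π 0 < π 1 then (π 0 + π 1) / 2 else π 0
  | (j + 1) =>
      if π (j + 1) < π (j + 2) then (π (j + 1) + π (j + 2)) / 2
      else if π j < π (j + 1) then (π j + π (j + 1)) / 2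
      else π (j + 1)

/-- `Φ^B` of a bipartition. -/
def PhiB (ρ σ : ℕ → ℕ) : ℕ → ℤ := phiB (interB ρ σ)

/-- Membership in `P^B_{2n+1}` for an integer sequence: nonnegative, weakly
decreasing, summing to `2n+1`, with every (positive) even part of even
multiplicity. -/
def IsPB (n : ℕ) (l : ℕ → ℤ) : Prop :=
  (∀ i, 0 ≤ l i) ∧ (∀ i, l (i + 1) ≤ l i) ∧
  (∃ N, (∀ i, N ≤ i → l i = 0) ∧ zsum l N = 2 * n + 1) ∧
  ∀ a : ℤ, 0 < a → Even a → Even ({i | l i = a}.ncard)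

/-- Membership in `P^B_{2n+1}` for a natural-number partition. -/
def IsPBN (n : ℕ) (l : ℕ → ℕ) : Prop :=
  IsPartition l ∧ IsComposition (2 * n + 1) l ∧
    ∀ a : ℕ, 0 < a → Even a → Even ({i | l i = a}.ncard)

/-- The map `Φ̂^B`, pointwise (0-indexed, so the paper's index `i` is `j+1`):
an odd part `λ_i` becomes `(λ_i + (−1)^i)/2`; a maximal run of an even part
`2k` starting at (0-indexed) position `s` becomes `k, k, …` if `s` is odd
(paper's `i` even) and `k−1, k+1, k−1, k+1, …` if `s` is even (paper's `i`
odd). -/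
noncomputable def hphiB (l : ℕ → ℕ) (j : ℕ) : ℕ :=
  if Odd (l j) then (if Even j then (l j - 1) / 2 else (l j + 1) / 2)
  else
    if Odd (runStart l j) then l j / 2
    else if Even (j - runStart l j) then l j / 2 - 1 else l j / 2 + 1

/-- First component of the special closure `(ρ;σ)°`. -/
def scRho (ρ σ : ℕ → ℕ) : ℕ → ℕ
  | 0 => if ρ 0 + 1 < σ 0 then (ρ 0 + σ 0) / 2 else ρ 0
  | (i + 1) =>
      if ρ (i + 1) + 1 < σ (i + 1) then (ρ (i + 1) + σ (i + 1)) / 2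
      else if σ i < ρ (i + 1) then (σ i + ρ (i + 1)) / 2
      else ρ (i + 1)

/-- Second component of the special closure `(ρ;σ)°`. -/
def scSigma (ρ σ : ℕ → ℕ) (i : ℕ) : ℕ :=
  if ρ i + 1 < σ i then (ρ i + σ i + 1) / 2
  else if σ i < ρ (i + 1) then (σ i + ρ (i + 1) + 1) / 2
  else σ i

/-- First component of the closure `(ρ;σ)~` into `Q_n^{B,2}`. -/
def tRho (ρ σ : ℕ → ℕ) (i : ℕ) : ℕ :=
  if ρ i + 2 < σ i then (ρ i + σ i + 1) / 2 - 1 else ρ i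

/-- Second component of the closure `(ρ;σ)~` into `Q_n^{B,2}`. -/
def tSigma (ρ σ : ℕ → ℕ) (i : ℕ) : ℕ :=
  if ρ i + 2 < σ i then (ρ i + σ i) / 2 + 1 else σ i

/-- First component of the closure `(ρ;σ)^B` into `Q_n^B`. -/
def bRho (ρ σ : ℕ → ℕ) : ℕ → ℕ
  | 0 => if ρ 0 + 2 < σ 0 then (ρ 0 + σ 0 + 1) / 2 - 1 else ρ 0
  | (i + 1) =>
      if ρ (i + 1) + 2 < σ (i + 1) then (ρ (i + 1) + σ (i + 1) + 1) / 2 - 1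
      else if σ i < ρ (i + 1) then (σ i + ρ (i + 1)) / 2
      else ρ (i + 1)

/-- Second component of the closure `(ρ;σ)^B` into `Q_n^B`. -/
def bSigma (ρ σ : ℕ → ℕ) (i : ℕ) : ℕ :=
  if ρ i + 2 < σ i then (ρ i + σ i) / 2 + 1
  else if σ i < ρ (i + 1) then (σ i + ρ (i + 1) + 1) / 2
  else σ i

/-- First component of the closure `(ρ;σ)^C` into `Q_n^C`. -/
def cRho (ρ σ : ℕ → ℕ) : ℕ → ℕ
  | 0 => if ρ 0 + 1 < σ 0 then (ρ 0 + σ 0) / 2 else ρ 0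
  | (i + 1) =>
      if ρ (i + 1) + 1 < σ (i + 1) then (ρ (i + 1) + σ (i + 1)) / 2
      else if σ i + 1 < ρ (i + 1) then (σ i + ρ (i + 1) + 1) / 2
      else ρ (i + 1)

/-- Second component of the closure `(ρ;σ)^C` into `Q_n^C`. -/
def cSigma (ρ σ : ℕ → ℕ) (i : ℕ) : ℕ :=
  if ρ i + 1 < σ i then (ρ i + σ i + 1) / 2
  else if σ i + 1 < ρ (i + 1) then (σ i + ρ (i + 1)) / 2
  else σ i

section AuxStatement8

private lemma psum_succ (π : ℕ → ℕ) (k : ℕ) : psum π (k+1) = psum π k + π k :=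
  Finset.sum_range_succ _ _

private lemma inter_even (ρ σ : ℕ → ℕ) (i : ℕ) : interleave ρ σ (2*i) = ρ i := by
  have h1 : (2*i) % 2 = 0 := by omega
  have h2 : (2*i) / 2 = i := by omega
  simp [interleave, h1, h2]

private lemma inter_odd (ρ σ : ℕ → ℕ) (i : ℕ) : interleave ρ σ (2*i+1) = σ i := by
  have h1 : (2*i+1) % 2 = 1 := by omega
  have h2 : (2*i+1) / 2 = i := by omega
  simp [interleave, h1, h2]

private lemma inter_even' (ρ σ : ℕ → ℕ) (i : ℕ) : interleave ρ σ (2*i+2) = ρ (i+1) := by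
  rw [show 2*i+2 = 2*(i+1) by ring, inter_even]

private lemma inter_odd' (ρ σ : ℕ → ℕ) (i : ℕ) : interleave ρ σ (2*i+3) = σ (i+1) := by
  rw [show 2*i+3 = 2*(i+1)+1 by ring, inter_odd]

private lemma phiC_zero (π : ℕ → ℕ) :
    phiC π 0 = if π 0 < π 1 then (π 0 + π 1)/2 else π 0 := rfl

private lemma phiC_succ (π : ℕ → ℕ) (j : ℕ) :
    phiC π (j+1) = if π (j+1) < π (j+2) then (π (j+1) + π (j+2))/2
      else if π j < π (j+1) then (π j + π (j+1))/2 else π (j+1) := rfl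

private lemma PhiC_zero (ρ σ : ℕ → ℕ) :
    PhiC ρ σ 0 = if ρ 0 < σ 0 then ρ 0 + σ 0 else 2 * ρ 0 := by
  have h0 : interleave ρ σ 0 = ρ 0 := by simpa using inter_even ρ σ 0
  have h1 : interleave ρ σ 1 = σ 0 := by simpa using inter_odd ρ σ 0
  unfold PhiC
  rw [phiC_zero]
  simp only [h0, h1]
  split_ifs <;> omega

private lemma PhiC_odd (ρ σ : ℕ → ℕ) (i : ℕ) :
    PhiC ρ σ (2*i+1) = if σ i < ρ (i+1) then σ i + ρ (i+1)
      else if ρ i < σ i then ρ i + σ i else 2 * σ i := by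
  have h0 : interleave ρ σ (2*i) = ρ i := inter_even ρ σ i
  have h1 : interleave ρ σ (2*i+1) = σ i := inter_odd ρ σ i
  have h2 : interleave ρ σ (2*i+2) = ρ (i+1) := inter_even' ρ σ i
  unfold PhiC
  rw [phiC_succ]
  simp only [h0, h1, h2]
  split_ifs <;> omega

private lemma PhiC_even (ρ σ : ℕ → ℕ) (i : ℕ) :
    PhiC ρ σ (2*i+2) = if ρ (i+1) < σ (i+1) then ρ (i+1) + σ (i+1)
      else if σ i < ρ (i+1) then σ i + ρ (i+1) else 2 * ρ (i+1) := by
  have h1 : interleave ρ σ (2*i+1) = σ i := inter_odd ρ σ i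
  have h2 : interleave ρ σ (2*i+2) = ρ (i+1) := inter_even' ρ σ i
  have h3 : interleave ρ σ (2*i+3) = σ (i+1) := inter_odd' ρ σ i
  unfold PhiC
  rw [show (2*i+2) = (2*i+1)+1 by ring, phiC_succ]
  simp only [show 2*i+1+1 = 2*i+2 by ring, show 2*i+1+2 = 2*i+3 by ring, h1, h2, h3]
  split_ifs <;> omega

private lemma cRho_zero (ρ σ : ℕ → ℕ) :
    cRho ρ σ 0 = if ρ 0 + 1 < σ 0 then (ρ 0 + σ 0)/2 else ρ 0 := rfl

private lemma cRho_succ (ρ σ : ℕ → ℕ) (i : ℕ) :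
    cRho ρ σ (i+1) = if ρ (i+1) + 1 < σ (i+1) then (ρ (i+1) + σ (i+1))/2
      else if σ i + 1 < ρ (i+1) then (σ i + ρ (i+1) + 1)/2 else ρ (i+1) := rfl

private lemma cSigma_def (ρ σ : ℕ → ℕ) (i : ℕ) :
    cSigma ρ σ i = if ρ i + 1 < σ i then (ρ i + σ i + 1)/2
      else if σ i + 1 < ρ (i+1) then (σ i + ρ (i+1))/2 else σ i := rfl


private lemma cRho_part (ρ σ : ℕ → ℕ) (hρ : IsPartition ρ) (hσ : IsPartition σ) :
    IsPartition (cRho ρ σ) := by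
  intro i
  match i with
  | 0 =>
    rw [cRho_succ, cRho_zero]
    have := hρ 0; have := hσ 0; have := hρ 1
    split_ifs <;> omega
  | (i+1) =>
    rw [cRho_succ, cRho_succ]
    have := hρ i; have := hρ (i+1); have := hσ i; have := hσ (i+1)
    split_ifs <;> omega

private lemma cSigma_part (ρ σ : ℕ → ℕ) (hρ : IsPartition ρ) (hσ : IsPartition σ) :
    IsPartition (cSigma ρ σ) := by
  intro i
  rw [cSigma_def, cSigma_def]
  have := hρ i; have := hρ (i+1); have := hσ i; have := hσ (i+1)
  split_ifs <;> omega

private lemma closure_QC (ρ σ : ℕ → ℕ) (hρ : IsPartition ρ) (hσ : IsPartition σ) :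
    QC (cRho ρ σ) (cSigma ρ σ) := by
  intro i
  rw [cSigma_def, cRho_succ]
  match i with
  | 0 =>
    rw [cRho_zero]
    have := hρ 0; have := hσ 0; have := hρ 1; have := hσ 1
    constructor
    · split_ifs <;> omega
    · split_ifs <;> omega
  | (i+1) =>
    rw [cRho_succ]
    have := hρ i; have := hρ (i+1); have := hσ i; have := hσ (i+1)
    have := hρ (i+2); have := hσ (i+2)
    constructor
    · split_ifs <;> omega
    · split_ifs <;> omega

private lemma closure_psum (ρ σ : ℕ → ℕ) (hρ : IsPartition ρ) (hσ : IsPartition σ) : ∀ i,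
    psum (interleave (cRho ρ σ) (cSigma ρ σ)) (2*i+1)
      = psum (interleave ρ σ) (2*i+1) + (if ρ i + 1 < σ i then (σ i - ρ i)/2 else 0)
  ∧ psum (interleave (cRho ρ σ) (cSigma ρ σ)) (2*i+2)
      = psum (interleave ρ σ) (2*i+2) + (if σ i + 1 < ρ (i+1) then (ρ (i+1) - σ i)/2 else 0) := by
  intro i
  induction i with
  | zero =>
    have c0 : interleave (cRho ρ σ) (cSigma ρ σ) 0 = cRho ρ σ 0 := by
      simpa using inter_even (cRho ρ σ) (cSigma ρ σ) 0
    have o0 : interleave ρ σ 0 = ρ 0 := by simpa using inter_even ρ σ 0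
    have c1 : interleave (cRho ρ σ) (cSigma ρ σ) 1 = cSigma ρ σ 0 := by
      simpa using inter_odd (cRho ρ σ) (cSigma ρ σ) 0
    have o1 : interleave ρ σ 1 = σ 0 := by simpa using inter_odd ρ σ 0
    have p1C : psum (interleave (cRho ρ σ) (cSigma ρ σ)) 1 = cRho ρ σ 0 := by
      simp [psum, c0]
    have p1O : psum (interleave ρ σ) 1 = ρ 0 := by simp [psum, o0]
    have p2C : psum (interleave (cRho ρ σ) (cSigma ρ σ)) 2
        = cRho ρ σ 0 + cSigma ρ σ 0 := by
      rw [show (2:ℕ) = 1+1 from rfl, psum_succ (interleave (cRho ρ σ) (cSigma ρ σ)) 1,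
        p1C, c1]
    have p2O : psum (interleave ρ σ) 2 = ρ 0 + σ 0 := by
      rw [show (2:ℕ) = 1+1 from rfl, psum_succ (interleave ρ σ) 1, p1O, o1]
    simp only [show 2*0+1 = 1 by ring, show 2*0+2 = 2 by ring]
    rw [p1C, p1O, p2C, p2O, cRho_zero, cSigma_def]
    simp only [Nat.zero_add, Nat.reduceAdd]
    have h00 : ρ 1 ≤ ρ 0 := hρ 0
    have h01 : σ 1 ≤ σ 0 := hσ 0
    constructor
    · split_ifs <;> omega
    · split_ifs <;> omega
  | succ i ih =>
    have a1 : psum (interleave (cRho ρ σ) (cSigma ρ σ)) (2*i+3)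
        = psum (interleave (cRho ρ σ) (cSigma ρ σ)) (2*i+2) + cRho ρ σ (i+1) := by
      rw [show 2*i+3 = (2*i+2)+1 by ring,
        psum_succ (interleave (cRho ρ σ) (cSigma ρ σ)) (2*i+2), inter_even']
    have a2 : psum (interleave ρ σ) (2*i+3)
        = psum (interleave ρ σ) (2*i+2) + ρ (i+1) := by
      rw [show 2*i+3 = (2*i+2)+1 by ring, psum_succ (interleave ρ σ) (2*i+2), inter_even']
    have e1 : psum (interleave (cRho ρ σ) (cSigma ρ σ)) (2*(i+1)+1)
        = psum (interleave ρ σ) (2*(i+1)+1)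
          + (if ρ (i+1) + 1 < σ (i+1) then (σ (i+1) - ρ (i+1))/2 else 0) := by
      rw [show 2*(i+1)+1 = 2*i+3 by ring, a1, a2, ih.2, cRho_succ]
      have := hρ i; have := hρ (i+1); have := hσ i; have := hσ (i+1)
      split_ifs <;> omega
    refine ⟨e1, ?_⟩
    have b1 : psum (interleave (cRho ρ σ) (cSigma ρ σ)) (2*i+4)
        = psum (interleave (cRho ρ σ) (cSigma ρ σ)) (2*i+3) + cSigma ρ σ (i+1) := by
      rw [show 2*i+4 = (2*i+3)+1 by ring,
        psum_succ (interleave (cRho ρ σ) (cSigma ρ σ)) (2*i+3), inter_odd']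
    have b2 : psum (interleave ρ σ) (2*i+4)
        = psum (interleave ρ σ) (2*i+3) + σ (i+1) := by
      rw [show 2*i+4 = (2*i+3)+1 by ring, psum_succ (interleave ρ σ) (2*i+3), inter_odd']
    rw [show 2*(i+1)+2 = 2*i+4 by ring, b1, b2, show 2*i+3 = 2*(i+1)+1 by ring, e1,
      cSigma_def]
    have := hρ (i+1); have := hσ (i+1); have := hρ (i+2)
    split_ifs <;> omega

private lemma closure_dominates (ρ σ : ℕ → ℕ) (hρ : IsPartition ρ) (hσ : IsPartition σ) :
    Dominates (interleave (cRho ρ σ) (cSigma ρ σ)) (interleave ρ σ) := by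
  intro k
  obtain ⟨i, hi | hi⟩ : ∃ i, k = 2*i ∨ k = 2*i+1 := ⟨k/2, by omega⟩
  · subst hi
    match i with
    | 0 => simp [psum]
    | (i+1) =>
      have := (closure_psum ρ σ hρ hσ i).2
      rw [show 2*(i+1) = 2*i+2 by ring]
      omega
  · subst hi
    have := (closure_psum ρ σ hρ hσ i).1
    omega

private lemma psum_stable (π : ℕ → ℕ) (N : ℕ) (hz : ∀ i, N ≤ i → π i = 0) :
    ∀ k, N ≤ k → psum π k = psum π N := by
  intro k hk
  induction k with
  | zero =>
    have h0 : N = 0 := Nat.le_zero.mp hk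
    rw [h0]
  | succ k ih =>
    rcases Nat.lt_or_ge k N with h | h
    · have : N = k + 1 := by omega
      rw [this]
    · rw [psum_succ π k, ih h, hz k h]
      omega

private lemma closure_comp (ρ σ : ℕ → ℕ) (n : ℕ) (hρ : IsPartition ρ) (hσ : IsPartition σ)
    (h : IsComposition n (interleave ρ σ)) :
    IsComposition n (interleave (cRho ρ σ) (cSigma ρ σ)) := by
  obtain ⟨N, hz, hsum⟩ := h
  have hzr : ∀ i, N ≤ i → ρ i = 0 := fun i hi => by
    have := hz (2*i) (by omega); rwa [inter_even] at this
  have hzs : ∀ i, N ≤ i → σ i = 0 := fun i hi => by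
    have := hz (2*i+1) (by omega); rwa [inter_odd] at this
  refine ⟨2*(N+1), ?_, ?_⟩
  · intro j hj
    obtain ⟨i, hi | hi⟩ : ∃ i, j = 2*i ∨ j = 2*i+1 := ⟨j/2, by omega⟩
    · subst hi
      rw [inter_even]
      match i, hj with
      | (i+1), hj =>
        rw [cRho_succ]
        have h1 : ρ (i+1) = 0 := hzr _ (by omega)
        have h2 : σ (i+1) = 0 := hzs _ (by omega)
        simp [h1, h2]
    · subst hi
      rw [inter_odd, cSigma_def]
      have h1 : σ i = 0 := hzs _ (by omega)
      have h2 : ρ (i+1) = 0 := hzr _ (by omega)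
      simp [h1, h2]
  · have hON : psum (interleave ρ σ) (2*(N+1)) = n := by
      rw [psum_stable (interleave ρ σ) N hz (2*(N+1)) (by omega)]; exact hsum
    have := (closure_psum ρ σ hρ hσ N).2
    have hr : ρ (N+1) = 0 := hzr _ (by omega)
    rw [show 2*(N+1) = 2*N+2 by ring] at hON ⊢
    rw [hr] at this
    split_ifs at this <;> omega

private lemma closure_min (ρ σ τ υ : ℕ → ℕ) (hρ : IsPartition ρ) (hσ : IsPartition σ)
    (hτ : QC τ υ) (hd : Dominates (interleave τ υ) (interleave ρ σ)) :
    Dominates (interleave τ υ) (interleave (cRho ρ σ) (cSigma ρ σ)) := by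
  intro k
  obtain ⟨i, hi | hi⟩ : ∃ i, k = 2*i ∨ k = 2*i+1 := ⟨k/2, by omega⟩
  · subst hi
    match i with
    | 0 => simp [psum]
    | (i+1) =>
      rw [show 2*(i+1) = 2*i+2 by ring]
      rw [(closure_psum ρ σ hρ hσ i).2]
      have hd1 := hd (2*i+1)
      have hd3 := hd (2*i+3)
      have eT2 : psum (interleave τ υ) (2*i+2) = psum (interleave τ υ) (2*i+1) + υ i := by
        rw [show 2*i+2 = (2*i+1)+1 by ring, psum_succ, inter_odd]
      have eT3 : psum (interleave τ υ) (2*i+3) = psum (interleave τ υ) (2*i+2) + τ (i+1) := by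
        rw [show 2*i+3 = (2*i+2)+1 by ring, psum_succ, inter_even']
      have eO2 : psum (interleave ρ σ) (2*i+2) = psum (interleave ρ σ) (2*i+1) + σ i := by
        rw [show 2*i+2 = (2*i+1)+1 by ring, psum_succ, inter_odd]
      have eO3 : psum (interleave ρ σ) (2*i+3) = psum (interleave ρ σ) (2*i+2) + ρ (i+1) := by
        rw [show 2*i+3 = (2*i+2)+1 by ring, psum_succ, inter_even']
      have hq := (hτ i).2
      have hd2 := hd (2*i+2)
      rw [eO3] at hd3
      split_ifs <;> omega
  · subst hi
    rw [(closure_psum ρ σ hρ hσ i).1]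
    have hd0 := hd (2*i)
    have hd2 := hd (2*i+2)
    have eT1 : psum (interleave τ υ) (2*i+1) = psum (interleave τ υ) (2*i) + τ i := by
      rw [psum_succ, inter_even]
    have eT2 : psum (interleave τ υ) (2*i+2) = psum (interleave τ υ) (2*i+1) + υ i := by
      rw [show 2*i+2 = (2*i+1)+1 by ring, psum_succ, inter_odd]
    have eO1 : psum (interleave ρ σ) (2*i+1) = psum (interleave ρ σ) (2*i) + ρ i := by
      rw [psum_succ, inter_even]
    have eO2 : psum (interleave ρ σ) (2*i+2) = psum (interleave ρ σ) (2*i+1) + σ i := by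
      rw [show 2*i+2 = (2*i+1)+1 by ring, psum_succ, inter_odd]
    have hq := (hτ i).1
    have hd1 := hd (2*i+1)
    split_ifs <;> omega

private lemma dom_antisymm {l m : ℕ → ℕ} (h1 : Dominates l m) (h2 : Dominates m l) :
    ∀ j, m j = l j := by
  intro j
  have e1 : psum l j = psum m j := le_antisymm (h2 j) (h1 j)
  have e2 : psum l (j+1) = psum m (j+1) := le_antisymm (h2 (j+1)) (h1 (j+1))
  have := psum_succ l j
  have := psum_succ m j
  omega


set_option maxHeartbeats 4000000 in
private lemma PhiC_closure (ρ σ : ℕ → ℕ) (hρ : IsPartition ρ) (hσ : IsPartition σ) (j : ℕ) :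
    PhiC ρ σ j = PhiC (cRho ρ σ) (cSigma ρ σ) j := by
  obtain ⟨i, hi | hi⟩ : ∃ i, j = 2*i ∨ j = 2*i+1 := ⟨j/2, by omega⟩
  · subst hi
    match i with
    | 0 =>
      simp only [Nat.mul_zero]
      rw [PhiC_zero, PhiC_zero, cRho_zero, cSigma_def]
      have := hρ 0; have := hσ 0
      have h1 : ρ 1 ≤ ρ 0 := hρ 0
      split_ifs <;> omega
    | (i+1) =>
      rw [show 2*(i+1) = 2*i+2 by ring, PhiC_even, PhiC_even, cRho_succ, cSigma_def,
        cSigma_def]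
      have := hρ i; have := hρ (i+1); have := hσ i; have := hσ (i+1); have := hρ (i+2)
      split_ifs <;> omega
  · subst hi
    rw [PhiC_odd, PhiC_odd, cRho_succ, cSigma_def]
    match i with
    | 0 =>
      rw [cRho_zero]
      have := hρ 0; have := hσ 0; have := hρ 1; have := hσ 1; have := hρ 2
      split_ifs <;> omega
    | (i+1) =>
      rw [cRho_succ]
      have := hρ i; have := hρ (i+1); have := hσ i; have := hσ (i+1)
      have := hρ (i+2); have := hσ (i+2)
      split_ifs <;> omega

private lemma part_le {l : ℕ → ℕ} (hl : IsPartition l) {i j : ℕ} (h : i ≤ j) : l j ≤ l i :=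
  antitone_nat_of_succ_le hl h

private lemma runStart_eq (l : ℕ → ℕ) (p s : ℕ) (h : ∀ j, l p < l j ↔ j < s) :
    runStart l p = s := by
  have hset : {j | l p < l j} = ↑(Finset.range s) := by
    ext j
    simp [h j]
  rw [runStart, hset, Set.ncard_coe_finset, Finset.card_range]

private lemma runStart_zero (l : ℕ → ℕ) (hl : IsPartition l) : runStart l 0 = 0 :=
  runStart_eq l 0 0 (fun j =>
    iff_of_false (not_lt.2 (part_le hl (Nat.zero_le j))) (by omega))

private lemma runStart_succ_eq (l : ℕ → ℕ) (p : ℕ) (h : l (p+1) = l p) :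
    runStart l (p+1) = runStart l p := by
  unfold runStart
  rw [h]

private lemma runStart_succ_lt (l : ℕ → ℕ) (hl : IsPartition l) (p : ℕ)
    (h : l (p+1) < l p) : runStart l (p+1) = p+1 := by
  refine runStart_eq l (p+1) (p+1) (fun j => ⟨fun hj => ?_, fun hj => ?_⟩)
  · by_contra hc
    push_neg at hc
    exact absurd (part_le hl hc) (not_le.2 hj)
  · exact lt_of_lt_of_le h (le_trans (le_refl _) (part_le hl (by omega : j ≤ p)))

private lemma runStart_le (l : ℕ → ℕ) (hl : IsPartition l) (p : ℕ) : runStart l p ≤ p := by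
  have hsub : {j | l p < l j} ⊆ ↑(Finset.range p) := by
    intro j hj
    simp only [Finset.coe_range, Set.mem_Iio]
    by_contra hc
    push_neg at hc
    exact absurd (part_le hl hc) (not_le.2 hj)
  have := Set.ncard_le_ncard hsub (Finset.range p).finite_toSet
  rwa [Set.ncard_coe_finset, Finset.card_range] at this

set_option maxHeartbeats 4000000 in
private lemma PhiC_part (μ ν : ℕ → ℕ) (hμ : IsPartition μ) (hν : IsPartition ν)
    (hQC : QC μ ν) : IsPartition (PhiC μ ν) := by
  intro j
  obtain ⟨i, hi | hi⟩ : ∃ i, j = 2*i ∨ j = 2*i+1 := ⟨j/2, by omega⟩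
  · subst hi
    rw [show 2*i+1 = 2*i+1 from rfl, PhiC_odd]
    match i with
    | 0 =>
      simp only [Nat.mul_zero]
      rw [PhiC_zero]
      have := hμ 0; have := hν 0; have := hμ 1; have := hν 1
      have q0 := hQC 0; have q1 := hQC 1
      split_ifs <;> omega
    | (i+1) =>
      rw [show 2*(i+1) = 2*i+2 by ring, PhiC_even]
      have := hμ i; have := hμ (i+1); have := hν i; have := hν (i+1); have := hμ (i+2)
      have := hν (i+2)
      have q0 := hQC i; have q1 := hQC (i+1); have q2 := hQC (i+2)
      split_ifs <;> omega
  · subst hi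
    rw [show 2*i+1+1 = 2*i+2 by ring, PhiC_even, PhiC_odd]
    have := hμ i; have := hμ (i+1); have := hν i; have := hν (i+1); have := hμ (i+2)
    have := hν (i+2)
    have q0 := hQC i; have q1 := hQC (i+1); have q2 := hQC (i+2)
    split_ifs <;> omega


private lemma lv0 (μ ν : ℕ → ℕ) (hQC : QC μ ν) :
    PhiC μ ν 0 = if ν 0 = μ 0 + 1 then 2*μ 0+1 else 2*μ 0 := by
  rw [PhiC_zero]
  have := hQC 0
  split_ifs <;> omega

private lemma lvodd (μ ν : ℕ → ℕ) (i : ℕ) (hQC : QC μ ν) :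
    PhiC μ ν (2*i+1) = if μ (i+1) = ν i + 1 then 2*ν i+1
      else if ν i = μ i + 1 then 2*μ i+1 else 2*ν i := by
  rw [PhiC_odd]
  have := hQC i
  split_ifs <;> omega

private lemma lveven (μ ν : ℕ → ℕ) (i : ℕ) (hQC : QC μ ν) :
    PhiC μ ν (2*i+2) = if ν (i+1) = μ (i+1) + 1 then 2*μ (i+1)+1
      else if μ (i+1) = ν i + 1 then 2*ν i+1 else 2*μ (i+1) := by
  rw [PhiC_even]
  have := hQC i; have := hQC (i+1)
  split_ifs <;> omega

private lemma runParity (μ ν : ℕ → ℕ) (hμ : IsPartition μ) (hν : IsPartition ν)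
    (hQC : QC μ ν) : ∀ i,
    (ν i = μ i + 1 → runStart (PhiC μ ν) (2*i) % 2 = 0) ∧
    (μ (i+1) = ν i + 1 → runStart (PhiC μ ν) (2*i+1) % 2 = 1) := by
  have hl : IsPartition (PhiC μ ν) := PhiC_part μ ν hμ hν hQC
  intro i
  induction i with
  | zero =>
    constructor
    · intro _
      rw [show 2*0 = 0 by norm_num, runStart_zero _ hl]
    · intro hB
      have hv1 : PhiC μ ν (2*0+1) = 2*ν 0+1 := by
        rw [lvodd μ ν 0 hQC, if_pos hB]
      have hv0 : PhiC μ ν (2*0) = 2*μ 0 := by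
        rw [show 2*0 = 0 by norm_num, lv0 μ ν hQC]
        have := hμ 0
        split_ifs <;> omega
      have hlt : PhiC μ ν ((2*0)+1) < PhiC μ ν (2*0) := by
        have hm := hl (2*0)
        omega
      rw [runStart_succ_lt _ hl (2*0) hlt]
  | succ i ih =>
    constructor
    · intro hA
      have hv2 : PhiC μ ν (2*i+2) = 2*μ (i+1)+1 := by
        rw [lveven μ ν i hQC, if_pos hA]
      by_cases hc : PhiC μ ν (2*i+2) = PhiC μ ν (2*i+1)
      · have hA' : ν i = μ i + 1 ∧ μ i = μ (i+1) := by
          have hv1f := lvodd μ ν i hQC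
          have heq : PhiC μ ν (2*i+1) = 2*μ (i+1)+1 := by rw [← hc, hv2]
          rw [heq] at hv1f
          have := hν i; have := hμ i; have q := hQC i
          split_ifs at hv1f <;> omega
        have hv1 : PhiC μ ν (2*i+1) = 2*μ i+1 := by
          rw [← hc, hv2]
          omega
        have hv0 : PhiC μ ν (2*i) = 2*μ i+1 := by
          match i, hA' with
          | 0, hA' => rw [show 2*0 = 0 by norm_num, lv0 μ ν hQC, if_pos hA'.1]
          | (k+1), hA' => rw [show 2*(k+1) = 2*k+2 by ring, lveven μ ν k hQC, if_pos hA'.1]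
        rw [show 2*(i+1) = (2*i+1)+1 by ring,
          runStart_succ_eq _ (2*i+1) (by rw [show 2*i+1+1 = 2*i+2 by ring, hv2, hv1]; omega),
          runStart_succ_eq _ (2*i) (hv1.trans hv0.symm)]
        exact ih.1 hA'.1
      · have hm := hl (2*i+1)
        rw [show 2*i+1+1 = 2*i+2 by ring] at hm
        have hlt : PhiC μ ν ((2*i+1)+1) < PhiC μ ν (2*i+1) := by
          rw [show 2*i+1+1 = 2*i+2 by ring]
          omega
        rw [show 2*(i+1) = (2*i+1)+1 by ring, runStart_succ_lt _ hl (2*i+1) hlt]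
        omega
    · intro hB
      have hv3 : PhiC μ ν (2*(i+1)+1) = 2*ν (i+1)+1 := by
        rw [lvodd μ ν (i+1) hQC, if_pos hB]
      by_cases hc : PhiC μ ν (2*(i+1)+1) = PhiC μ ν (2*i+2)
      · have hB' : μ (i+1) = ν i + 1 ∧ ν i = ν (i+1) := by
          have hv2f := lveven μ ν i hQC
          rw [← hc, hv3] at hv2f
          have := hμ (i+1); have := hν i; have q := hQC (i+1)
          split_ifs at hv2f <;> omega
        have hv1 : PhiC μ ν (2*i+1) = 2*ν i+1 := by
          rw [lvodd μ ν i hQC, if_pos hB'.1]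
        have hv2 : PhiC μ ν (2*i+2) = 2*ν i+1 := by
          rw [← hc, hv3]
          omega
        rw [show 2*(i+1)+1 = (2*i+2)+1 by ring,
          runStart_succ_eq _ (2*i+2) (by rw [show 2*i+2+1 = 2*(i+1)+1 by ring, hv3, hv2]; omega),
          show 2*i+2 = (2*i+1)+1 by ring,
          runStart_succ_eq _ (2*i+1) (by rw [show 2*i+1+1 = 2*i+2 by ring, hv2, hv1])]
        exact ih.2 hB'.1
      · have hm := hl (2*i+2)
        rw [show 2*i+2+1 = 2*(i+1)+1 by ring] at hm
        have hlt : PhiC μ ν ((2*i+2)+1) < PhiC μ ν (2*i+2) := by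
          rw [show 2*i+2+1 = 2*(i+1)+1 by ring]
          omega
        rw [show 2*(i+1)+1 = (2*i+2)+1 by ring, runStart_succ_lt _ hl (2*i+2) hlt]
        omega

private lemma hphiC_PhiC (μ ν : ℕ → ℕ) (hμ : IsPartition μ) (hν : IsPartition ν)
    (hQC : QC μ ν) : ∀ j, hphiC (PhiC μ ν) j = interleave μ ν j := by
  have hl : IsPartition (PhiC μ ν) := PhiC_part μ ν hμ hν hQC
  intro j
  obtain ⟨i, hi | hi⟩ : ∃ i, j = 2*i ∨ j = 2*i+1 := ⟨j/2, by omega⟩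
  · subst hi
    rw [inter_even]
    match i with
    | 0 =>
      rw [show 2*0 = 0 by norm_num]
      have hrs : runStart (PhiC μ ν) 0 = 0 := runStart_zero _ hl
      by_cases hA : ν 0 = μ 0 + 1
      · have hv : PhiC μ ν 0 = 2*μ 0+1 := by rw [lv0 μ ν hQC, if_pos hA]
        unfold hphiC
        rw [hv, hrs]
        simp only [Nat.even_iff]
        split_ifs <;> omega
      · have hv : PhiC μ ν 0 = 2*μ 0 := by rw [lv0 μ ν hQC, if_neg hA]
        unfold hphiC
        rw [hv]
        simp only [Nat.even_iff]
        split_ifs <;> omega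
    | (k+1) =>
      rw [show 2*(k+1) = 2*k+2 by ring]
      by_cases hA : ν (k+1) = μ (k+1) + 1
      · have hv : PhiC μ ν (2*k+2) = 2*μ (k+1)+1 := by rw [lveven μ ν k hQC, if_pos hA]
        have hrs := (runParity μ ν hμ hν hQC (k+1)).1 hA
        rw [show 2*(k+1) = 2*k+2 by ring] at hrs
        have hle := runStart_le _ hl (2*k+2)
        unfold hphiC
        rw [hv]
        simp only [Nat.even_iff]
        split_ifs <;> omega
      · by_cases hB : μ (k+1) = ν k + 1
        · have hv : PhiC μ ν (2*k+2) = 2*ν k+1 := by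
            rw [lveven μ ν k hQC, if_neg hA, if_pos hB]
          have hv1 : PhiC μ ν (2*k+1) = 2*ν k+1 := by rw [lvodd μ ν k hQC, if_pos hB]
          have hre : runStart (PhiC μ ν) (2*k+2) = runStart (PhiC μ ν) (2*k+1) := by
            rw [show 2*k+2 = (2*k+1)+1 by ring]
            exact runStart_succ_eq _ (2*k+1)
              (by rw [show 2*k+1+1 = 2*k+2 by ring, hv, hv1])
          have hrs := (runParity μ ν hμ hν hQC k).2 hB
          have hle := runStart_le _ hl (2*k+1)
          unfold hphiC
          rw [hv, hre]
          simp only [Nat.even_iff]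
          split_ifs <;> omega
        · have hv : PhiC μ ν (2*k+2) = 2*μ (k+1) := by
            rw [lveven μ ν k hQC, if_neg hA, if_neg hB]
          unfold hphiC
          rw [hv]
          simp only [Nat.even_iff]
          split_ifs <;> omega
  · subst hi
    rw [inter_odd]
    by_cases hB : μ (i+1) = ν i + 1
    · have hv : PhiC μ ν (2*i+1) = 2*ν i+1 := by rw [lvodd μ ν i hQC, if_pos hB]
      have hrs := (runParity μ ν hμ hν hQC i).2 hB
      have hle := runStart_le _ hl (2*i+1)
      unfold hphiC
      rw [hv]
      simp only [Nat.even_iff]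
      split_ifs <;> omega
    · by_cases hA : ν i = μ i + 1
      · have hv : PhiC μ ν (2*i+1) = 2*μ i+1 := by
          rw [lvodd μ ν i hQC, if_neg hB, if_pos hA]
        have hv0 : PhiC μ ν (2*i) = 2*μ i+1 := by
          match i, hA with
          | 0, hA => rw [show 2*0 = 0 by norm_num, lv0 μ ν hQC, if_pos hA]
          | (k+1), hA => rw [show 2*(k+1) = 2*k+2 by ring, lveven μ ν k hQC, if_pos hA]
        have hre : runStart (PhiC μ ν) (2*i+1) = runStart (PhiC μ ν) (2*i) :=
          runStart_succ_eq _ (2*i) (hv.trans hv0.symm)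
        have hrs := (runParity μ ν hμ hν hQC i).1 hA
        have hle := runStart_le _ hl (2*i)
        unfold hphiC
        rw [hv, hre]
        simp only [Nat.even_iff]
        split_ifs <;> omega
      · have hv : PhiC μ ν (2*i+1) = 2*ν i := by
          rw [lvodd μ ν i hQC, if_neg hB, if_neg hA]
        unfold hphiC
        rw [hv]
        simp only [Nat.even_iff]
        split_ifs <;> omega

end AuxStatement8

/-- for `(ρ;σ) ∈ Q_n` and `(μ;ν) ∈ Q_n^C`, the conditions
`Φ̂^C(Φ^C(ρ;σ)) = (μ;ν)`, `Φ^C(ρ;σ) = Φ^C(μ;ν)`, and `(μ;ν)` being the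
minimum C-distinguished bipartition dominating `(ρ;σ)` are equivalent. -/
theorem hphiC_phiC_eq_iff (n : ℕ) (ρ σ μ ν : ℕ → ℕ)
    (h1 : IsBipartition n ρ σ) (h2 : IsBipartition n μ ν) (h3 : QC μ ν) :
    ((∀ i, hphiC (PhiC ρ σ) i = interleave μ ν i) ↔
      (∀ i, PhiC ρ σ i = PhiC μ ν i)) ∧
    ((∀ i, PhiC ρ σ i = PhiC μ ν i) ↔
      (BiLE ρ σ μ ν ∧ ∀ τ υ : ℕ → ℕ, IsBipartition n τ υ → QC τ υ →
        BiLE ρ σ τ υ → BiLE μ ν τ υ)) := by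
  obtain ⟨hρ, hσ, hcomp⟩ := h1
  obtain ⟨hμ, hν, hcompμ⟩ := h2
  have hcρ : IsPartition (cRho ρ σ) := cRho_part ρ σ hρ hσ
  have hcσ : IsPartition (cSigma ρ σ) := cSigma_part ρ σ hρ hσ
  have hcQC : QC (cRho ρ σ) (cSigma ρ σ) := closure_QC ρ σ hρ hσ
  have hccomp : IsComposition n (interleave (cRho ρ σ) (cSigma ρ σ)) :=
    closure_comp ρ σ n hρ hσ hcomp
  have hC4 : PhiC ρ σ = PhiC (cRho ρ σ) (cSigma ρ σ) := funext (PhiC_closure ρ σ hρ hσ)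
  have hI : ∀ j, hphiC (PhiC (cRho ρ σ) (cSigma ρ σ)) j
      = interleave (cRho ρ σ) (cSigma ρ σ) j := hphiC_PhiC _ _ hcρ hcσ hcQC
  have hIμ : ∀ j, hphiC (PhiC μ ν) j = interleave μ ν j := hphiC_PhiC μ ν hμ hν h3
  have hdom : Dominates (interleave (cRho ρ σ) (cSigma ρ σ)) (interleave ρ σ) :=
    closure_dominates ρ σ hρ hσ
  have key : (∀ i, PhiC ρ σ i = PhiC μ ν i)
      ↔ (∀ j, interleave μ ν j = interleave (cRho ρ σ) (cSigma ρ σ) j) := by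
    constructor
    · intro h j
      have hP : PhiC μ ν = PhiC (cRho ρ σ) (cSigma ρ σ) :=
        (funext fun k => (h k).symm).trans hC4
      rw [← hIμ j, ← hI j, hP]
    · intro h i
      have hfun : interleave μ ν = interleave (cRho ρ σ) (cSigma ρ σ) := funext h
      rw [hC4]
      unfold PhiC
      rw [hfun]
  constructor
  · constructor
    · intro h
      refine key.2 (fun j => ?_)
      rw [← h j, hC4]
      exact hI j
    · intro h j
      rw [hC4, hI j]
      exact (key.1 h j).symm
  · constructor
    · intro h
      have hfun : interleave μ ν = interleave (cRho ρ σ) (cSigma ρ σ) :=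
        funext (key.1 h)
      refine ⟨?_, ?_⟩
      · show Dominates (interleave μ ν) (interleave ρ σ)
        rw [hfun]
        exact hdom
      · intro τ υ hb hq hle
        show Dominates (interleave τ υ) (interleave μ ν)
        rw [hfun]
        exact closure_min ρ σ τ υ hρ hσ hq hle
    · rintro ⟨hle, hm⟩
      have h5 : Dominates (interleave (cRho ρ σ) (cSigma ρ σ)) (interleave μ ν) :=
        hm _ _ ⟨hcρ, hcσ, hccomp⟩ hcQC hdom
      have h6 : Dominates (interleave μ ν) (interleave (cRho ρ σ) (cSigma ρ σ)) :=
        closure_min ρ σ μ ν hρ hσ h3 hle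
      exact key.2 (dom_antisymm h5 h6)
end

section
/- Define Φ^B on bipartitions of n: given (ρ;σ), form the sequence (2ρ_1+1, 2σ_1−1, 2ρ_2+1, 2σ_2−1, ...) (with the convention that the tail becomes −1, 1, −1, 1, ...); whenever two consecutive terms s, t satisfy s < t, replace them with (s+t)/2, (s+t)/2 (which is an integer); the entries of the infinite tail all become 0. Then the result Φ^B(ρ;σ) is a partition of 2n+1 in which every even part has even multiplicity. -/
open Finset

/-- for a bipartition `(ρ;σ)` of `n`, `Φ^B(ρ;σ)` is a partition
of `2n+1` in which every even part has even multiplicity. -/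
theorem phiB_mem_PB (n : ℕ) (ρ σ : ℕ → ℕ) (h : IsBipartition n ρ σ) :
    IsPB n (PhiB ρ σ) := by
  obtain ⟨hρ, hσ, hcomp⟩ := h
  obtain ⟨N, hN0, hNs⟩ := hcomp
  set π := interB ρ σ with hπdef
  -- basic facts about π
  have hodd : ∀ i, π i % 2 = 1 := by
    intro i
    rcases Nat.mod_two_eq_zero_or_one i with hi | hi <;>
      simp only [hπdef, interB, hi, if_true, if_false, reduceIte] <;> omega
  have hquasi : ∀ i, π (i + 2) ≤ π i := by
    intro i
    have h2 : (i + 2) % 2 = i % 2 := by omega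
    have h3 : (i + 2) / 2 = i / 2 + 1 := by omega
    simp only [hπdef, interB, h2, h3]
    rcases Nat.mod_two_eq_zero_or_one i with hi | hi <;> simp only [hi, reduceIte]
    · have := hρ (i / 2); omega
    · have := hσ (i / 2); omega
  have hlow : ∀ i, -1 ≤ π i := by
    intro i
    rcases Nat.mod_two_eq_zero_or_one i with hi | hi <;>
      simp only [hπdef, interB, hi, reduceIte] <;> omega
  have hge : ∀ i, i % 2 = 0 → 1 ≤ π i := by
    intro i hi
    simp only [hπdef, interB, hi, reduceIte]; omega
  -- tail facts
  have hρ0 : ∀ k, N ≤ k → ρ k = 0 := by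
    intro k hk
    have h1 : (2 * k) % 2 = 0 := by omega
    have h2 : (2 * k) / 2 = k := by omega
    have := hN0 (2 * k) (by omega)
    simpa [interleave, h1, h2] using this
  have hσ0 : ∀ k, N ≤ k → σ k = 0 := by
    intro k hk
    have h1 : (2 * k + 1) % 2 = 1 := by omega
    have h2 : (2 * k + 1) / 2 = k := by omega
    have := hN0 (2 * k + 1) (by omega)
    simpa [interleave, h1, h2] using this
  have hptail : ∀ j, 2 * N ≤ j → π j = if j % 2 = 0 then 1 else -1 := by
    intro j hj
    rcases Nat.mod_two_eq_zero_or_one j with hi | hi <;>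
      simp only [hπdef, interB, hi, reduceIte]
    · rw [hρ0 (j / 2) (by omega)]; norm_num
    · rw [hσ0 (j / 2) (by omega)]; norm_num
  -- unfolding lemmas for PhiB
  have hl0 : PhiB ρ σ 0 = if π 0 < π 1 then (π 0 + π 1) / 2 else π 0 := rfl
  have hlS : ∀ j, PhiB ρ σ (j + 1) =
      if π (j + 1) < π (j + 2) then (π (j + 1) + π (j + 2)) / 2
      else if π j < π (j + 1) then (π j + π (j + 1)) / 2
      else π (j + 1) := fun j => rfl
  -- nonnegativity
  have hnn : ∀ i, 0 ≤ PhiB ρ σ i := by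
    intro i
    cases i with
    | zero =>
      rw [hl0]
      have h1 := hge 0 rfl
      have h2 := hlow 1
      have o0 := hodd 0
      have o1 := hodd 1
      split_ifs <;> omega
    | succ j =>
      rw [hlS j]
      have h1 := hlow j
      have h2 := hlow (j + 1)
      have h3 := hlow (j + 2)
      have o0 := hodd j
      have o1 := hodd (j + 1)
      have o2 := hodd (j + 2)
      have hd : 1 ≤ π (j + 1) ∨ 1 ≤ π (j + 2) := by
        rcases Nat.mod_two_eq_zero_or_one (j + 1) with hi | hi
        · exact Or.inl (hge _ hi)
        · exact Or.inr (hge (j + 2) (by omega))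
      rcases hd with hd | hd <;> split_ifs <;> omega
  -- monotonicity
  have hmono : ∀ i, PhiB ρ σ (i + 1) ≤ PhiB ρ σ i := by
    intro i
    cases i with
    | zero =>
      rw [hlS 0, hl0]
      simp only [Nat.zero_add]
      have q0 : π 2 ≤ π 0 := hquasi 0
      have q1 := hquasi 1
      have o0 := hodd 0
      have o1 := hodd 1
      have o2 := hodd 2
      split_ifs <;> omega
    | succ j =>
      rw [hlS (j + 1), hlS j]
      have e2 : j + 1 + 1 = j + 2 := rfl
      have e3 : j + 1 + 2 = j + 3 := rfl
      rw [e2, e3]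
      have q0 : π (j + 2) ≤ π j := hquasi j
      have q1 : π (j + 3) ≤ π (j + 1) := hquasi (j + 1)
      have o0 := hodd j
      have o1 := hodd (j + 1)
      have o2 := hodd (j + 2)
      have o3 := hodd (j + 3)
      split_ifs <;> omega
  -- zero tail
  have hzero : ∀ i, 2 * N + 1 ≤ i → PhiB ρ σ i = 0 := by
    intro i hi
    obtain ⟨j, rfl⟩ : ∃ j, i = j + 1 := ⟨i - 1, by omega⟩
    rw [hlS j]
    have t1 := hptail j (by omega)
    have t2 := hptail (j + 1) (by omega)
    have t3 := hptail (j + 2) (by omega)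
    rcases Nat.mod_two_eq_zero_or_one j with hj | hj
    · rw [if_pos hj] at t1
      rw [if_neg (by omega)] at t2
      rw [if_pos (by omega)] at t3
      rw [t1, t2, t3]
      split_ifs <;> omega
    · rw [if_neg (by omega)] at t1
      rw [if_pos (by omega)] at t2
      rw [if_neg (by omega)] at t3
      rw [t1, t2, t3]
      split_ifs <;> omega
  -- sum of π over even prefixes
  have hsum2 : ∀ k, zsum π (2 * k) = 2 * (psum (interleave ρ σ) (2 * k) : ℤ) := by
    intro k
    induction k with
    | zero => simp [zsum, psum]
    | succ k ih =>
      have e : 2 * (k + 1) = 2 * k + 1 + 1 := by ring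
      have v1 : π (2 * k) = 2 * (ρ k : ℤ) + 1 := by
        simp only [hπdef, interB]
        rw [if_pos (by omega), show (2 * k) / 2 = k by omega]
      have v2 : π (2 * k + 1) = 2 * (σ k : ℤ) - 1 := by
        simp only [hπdef, interB]
        rw [if_neg (by omega), show (2 * k + 1) / 2 = k by omega]
      have w1 : interleave ρ σ (2 * k) = ρ k := by
        simp only [interleave]
        rw [if_pos (by omega), show (2 * k) / 2 = k by omega]
      have w2 : interleave ρ σ (2 * k + 1) = σ k := by
        simp only [interleave]
        rw [if_neg (by omega), show (2 * k + 1) / 2 = k by omega]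
      simp only [zsum, psum] at ih ⊢
      rw [e, Finset.sum_range_succ, Finset.sum_range_succ,
        Finset.sum_range_succ (f := fun i => interleave ρ σ i),
        Finset.sum_range_succ (f := fun i => interleave ρ σ i)]
      rw [v1, v2, w1, w2]
      push_cast
      push_cast at ih
      omega
  have hpN : ∀ M, N ≤ M → psum (interleave ρ σ) M = n := by
    intro M hM
    induction M, hM using Nat.le_induction with
    | base => exact hNs
    | succ M hM ih =>
      simp only [psum] at ih ⊢
      rw [Finset.sum_range_succ, ih, hN0 M hM]
      omega
  have hzsum : zsum π (2 * N + 1) = 2 * (n : ℤ) + 1 := by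
    have h1 : zsum π (2 * N + 1) = zsum π (2 * N) + π (2 * N) := by
      simp only [zsum]; rw [Finset.sum_range_succ]
    have h2 := hsum2 N
    have h3 := hpN (2 * N) (by omega)
    have h4 := hptail (2 * N) (by omega)
    rw [if_pos (by omega)] at h4
    rw [h1, h2, h3, h4]
  -- sum invariant
  have hinv : ∀ k, 2 * zsum (PhiB ρ σ) (k + 1) = 2 * zsum π (k + 1) +
      (if π k < π (k + 1) then π (k + 1) - π k else 0) := by
    intro k
    induction k with
    | zero =>
      simp only [zsum, Finset.sum_range_one, Nat.zero_add]
      rw [hl0]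
      have o0 := hodd 0
      have o1 := hodd 1
      split_ifs <;> omega
    | succ k ih =>
      have e1 : zsum (PhiB ρ σ) (k + 1 + 1) = zsum (PhiB ρ σ) (k + 1) + PhiB ρ σ (k + 1) := by
        simp only [zsum]; rw [Finset.sum_range_succ]
      have e2 : zsum π (k + 1 + 1) = zsum π (k + 1) + π (k + 1) := by
        simp only [zsum]; rw [Finset.sum_range_succ]
      rw [e1, e2, hlS k]
      have ek : k + 1 + 1 = k + 2 := rfl
      rw [ek]
      have q0 : π (k + 2) ≤ π k := hquasi k
      have o0 := hodd k
      have o1 := hodd (k + 1)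
      have o2 := hodd (k + 2)
      split_ifs at ih ⊢ <;> omega
  have hsuml : zsum (PhiB ρ σ) (2 * N + 1) = 2 * (n : ℤ) + 1 := by
    have h1 := hinv (2 * N)
    have t1 := hptail (2 * N) (by omega)
    have t2 := hptail (2 * N + 1) (by omega)
    rw [if_pos (by omega)] at t1
    rw [if_neg (by omega)] at t2
    rw [if_neg (by omega : ¬ π (2 * N) < π (2 * N + 1)), add_zero] at h1
    omega
  -- even multiplicity
  have hmult : ∀ a : ℤ, 0 < a → Even a → Even ({i | PhiB ρ σ i = a}.ncard) := by
    intro a ha hae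
    have hae2 : a % 2 = 0 := Int.even_iff.mp hae
    have hpair : ∀ i, π i < π (i + 1) → PhiB ρ σ (i + 1) = PhiB ρ σ i := by
      intro i hi
      cases i with
      | zero =>
        have hi' : π 0 < π 1 := hi
        have hq : π 2 ≤ π 0 := hquasi 0
        rw [hlS 0, hl0]
        simp only [Nat.zero_add]
        split_ifs <;> omega
      | succ j =>
        have hi' : π (j + 1) < π (j + 2) := hi
        have hq : π (j + 3) ≤ π (j + 1) := hquasi (j + 1)
        rw [hlS (j + 1), hlS j]
        have e2 : j + 1 + 1 = j + 2 := rfl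
        have e3 : j + 1 + 2 = j + 3 := rfl
        rw [e2, e3]
        split_ifs <;> omega
    have hSsub : {i | PhiB ρ σ i = a} ⊆ Set.Iio (2 * N + 1) := by
      intro i hi
      simp only [Set.mem_setOf_eq] at hi
      by_contra hc
      simp only [Set.mem_Iio, not_lt] at hc
      rw [hzero i (by omega)] at hi
      omega
    have hSfin : {i | PhiB ρ σ i = a}.Finite :=
      Set.Finite.subset (Set.finite_Iio (2 * N + 1)) hSsub
    have hSeq : {i | PhiB ρ σ i = a} =
        {i | PhiB ρ σ i = a ∧ π i < π (i + 1)} ∪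
          (fun i => i + 1) '' {i | PhiB ρ σ i = a ∧ π i < π (i + 1)} := by
      ext i
      simp only [Set.mem_setOf_eq, Set.mem_union, Set.mem_image]
      constructor
      · intro hi
        by_cases h1 : π i < π (i + 1)
        · exact Or.inl ⟨hi, h1⟩
        · cases i with
          | zero =>
            exfalso
            have h1' : ¬ π 0 < π 1 := h1
            rw [hl0, if_neg h1'] at hi
            have := hodd 0
            omega
          | succ j =>
            by_cases h2 : π j < π (j + 1)
            · exact Or.inr ⟨j, ⟨(hpair j h2).symm.trans hi, h2⟩, rfl⟩
            · exfalso
              have h1' : ¬ π (j + 1) < π (j + 2) := h1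
              rw [hlS j, if_neg h1', if_neg h2] at hi
              have := hodd (j + 1)
              omega
      · rintro (⟨hi, _⟩ | ⟨j, ⟨hj, hsw⟩, rfl⟩)
        · exact hi
        · exact (hpair j hsw).trans hj
    have hS0sub : {i | PhiB ρ σ i = a ∧ π i < π (i + 1)} ⊆ {i | PhiB ρ σ i = a} := by
      intro i hi; exact hi.1
    have hfin0 : {i | PhiB ρ σ i = a ∧ π i < π (i + 1)}.Finite := hSfin.subset hS0sub
    have hinj : Function.Injective (fun i : ℕ => i + 1) := fun x y hxy => by
      simpa using hxy
    have hdisj : Disjoint {i | PhiB ρ σ i = a ∧ π i < π (i + 1)}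
        ((fun i => i + 1) '' {i | PhiB ρ σ i = a ∧ π i < π (i + 1)}) := by
      rw [Set.disjoint_left]
      rintro i ⟨_, h1⟩ ⟨j, ⟨_, h2⟩, rfl⟩
      have h1' : π (j + 1) < π (j + 2) := h1
      have := hquasi j
      omega
    rw [hSeq, Set.ncard_union_eq hdisj hfin0 (hfin0.image _),
      Set.ncard_image_of_injective _ hinj]
    exact ⟨_, rfl⟩
  exact ⟨hnn, hmono, ⟨2 * N + 1, hzero, hsuml⟩, hmult⟩
end

section
/- If a partition λ of 2n+1 has all even parts of even multiplicity, and Φ̂^B(λ) is defined by: replacing each odd part λ_i by (λ_i + (−1)^i)/2, and replacing every maximal string of equal even parts λ_i = λ_{i+1} = ... = 2k (with λ_{i−1} > 2k) by k, k, ... if i is even, or by k−1, k+1, k−1, k+1, ... if i is odd, then the resulting sequence is a quasi-partition of n whose associated bipartition (μ;ν) = Φ̂^B(λ) satisfies μ_i ≥ ν_i − 2 and ν_i ≥ μ_{i+1} for all i, i.e. Φ̂^B(λ) ∈ Q_n^B. -/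
open Finset

section A
lemma aux_anti (l : ℕ → ℕ) (hp : IsPartition l) : Antitone l :=
  antitone_nat_of_succ_le hp

lemma aux_rs (l : ℕ → ℕ) (hp : IsPartition l) (j : ℕ) :
    runStart l j ≤ j ∧ l (runStart l j) = l j ∧ ∀ i, i < runStart l j ↔ l j < l i := by
  have anti := aux_anti l hp
  have hex : ∃ i, l i ≤ l j := ⟨j, le_rfl⟩
  have hiff : ∀ i, l j < l i ↔ i < Nat.find hex := by
    intro i
    constructor
    · intro hlt
      by_contra hc
      push_neg at hc
      exact absurd (le_trans (anti hc) (Nat.find_spec hex)) (not_le.mpr hlt)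
    · intro hlt
      exact lt_of_not_ge (Nat.find_min hex hlt)
  have hset : {i | l j < l i} = Set.Iio (Nat.find hex) := Set.ext fun i => hiff i
  have hrs : runStart l j = Nat.find hex := by
    rw [runStart, hset, ← Finset.coe_range, Set.ncard_coe_finset, Finset.card_range]
  have hle : Nat.find hex ≤ j := Nat.find_min' hex le_rfl
  refine ⟨hrs ▸ hle, ?_, fun i => by rw [hrs]; exact (hiff i).symm⟩
  rw [hrs]
  exact le_antisymm (Nat.find_spec hex) (anti hle)

lemma aux_rs_le (l : ℕ → ℕ) (hp : IsPartition l) (j : ℕ) : runStart l j ≤ j := (aux_rs l hp j).1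
lemma aux_rs_val (l : ℕ → ℕ) (hp : IsPartition l) (j : ℕ) : l (runStart l j) = l j := (aux_rs l hp j).2.1
lemma aux_rs_iff (l : ℕ → ℕ) (hp : IsPartition l) (j i : ℕ) : i < runStart l j ↔ l j < l i := (aux_rs l hp j).2.2 i

lemma aux_rs_congr (l : ℕ → ℕ) {i j : ℕ} (h : l i = l j) : runStart l i = runStart l j := by
  unfold runStart; rw [h]

lemma aux_run_const (l : ℕ → ℕ) (hp : IsPartition l) {i j : ℕ}
    (h1 : runStart l j ≤ i) (h2 : i ≤ j) : l i = l j := by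
  have anti := aux_anti l hp
  have h3 := anti h1
  rw [aux_rs_val l hp j] at h3
  exact le_antisymm h3 (anti h2)

lemma aux_mult_eq (l : ℕ → ℕ) (hp : IsPartition l) {k : ℕ} (h : l (k+1) < l k) :
    {i | l i = l k} = Set.Ico (runStart l k) (k+1) := by
  have anti := aux_anti l hp
  ext i
  simp only [Set.mem_setOf_eq, Set.mem_Ico]
  constructor
  · intro hi
    constructor
    · by_contra hc
      push_neg at hc
      have := (aux_rs_iff l hp k i).mp hc
      omega
    · by_contra hc
      push_neg at hc
      have := anti hc
      omega
  · rintro ⟨h1, h2⟩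
    exact aux_run_const l hp h1 (by omega)

lemma aux_ico_ncard (a b : ℕ) : (Set.Ico a b).ncard = b - a := by
  rw [← Finset.coe_Ico, Set.ncard_coe_finset, Nat.card_Ico]

lemma aux_run_continue (l : ℕ → ℕ) (hp : IsPartition l)
    (hm : ∀ a : ℕ, 0 < a → Even a → Even ({i | l i = a}.ncard))
    {k : ℕ} (h0 : 0 < l k) (he : l k % 2 = 0) (ho : (k - runStart l k) % 2 = 0) :
    l (k+1) = l k := by
  by_contra hne
  have hlt : l (k+1) < l k := lt_of_le_of_ne (hp k) hne
  have hev := hm (l k) h0 (Nat.even_iff.mpr he)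
  rw [aux_mult_eq l hp hlt, aux_ico_ncard, Nat.even_iff] at hev
  have hsle := aux_rs_le l hp k
  omega
end A
def Osum (l : ℕ → ℕ) (k : ℕ) : ℕ := ∑ j ∈ Finset.range k, l j % 2

lemma aux_psum_parity (l : ℕ → ℕ) (k : ℕ) : psum l k % 2 = Osum l k % 2 := by
  induction k with
  | zero => rfl
  | succ k ih =>
    have h1 : psum l (k+1) = psum l k + l k := by
      unfold psum; exact Finset.sum_range_succ _ _
    have h2 : Osum l (k+1) = Osum l k + l k % 2 := by
      unfold Osum; exact Finset.sum_range_succ _ _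
    omega

lemma aux_sum_split (f : ℕ → ℕ) {a b : ℕ} (h : a ≤ b) :
    ∑ j ∈ Finset.range b, f j = (∑ j ∈ Finset.range a, f j) + ∑ j ∈ Finset.Ico a b, f j := by
  rw [Finset.range_eq_Ico,
    ← Finset.sum_Ico_consecutive f (Nat.zero_le a) h, Finset.range_eq_Ico]

lemma aux_key (l : ℕ → ℕ) (hp : IsPartition l)
    (hm : ∀ a : ℕ, 0 < a → Even a → Even ({i | l i = a}.ncard)) :
    ∀ s : ℕ, (s = 0 ∨ l s < l (s - 1)) → s % 2 = Osum l s % 2 := by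
  intro s
  induction s using Nat.strong_induction_on with
  | _ s ih =>
    intro hbd
    rcases hbd with rfl | hlt
    · simp [Osum]
    · obtain ⟨t, rfl⟩ : ∃ t, s = t + 1 := by
        rcases s with _ | t
        · exact absurd hlt (lt_irrefl _)
        · exact ⟨t, rfl⟩
      simp only [Nat.add_sub_cancel] at hlt
      have hsle : runStart l t ≤ t := aux_rs_le l hp t
      have hrun : ∀ i, runStart l t ≤ i → i ≤ t → l i = l t :=
        fun i h1 h2 => aux_run_const l hp h1 h2
      have hbd' : runStart l t = 0 ∨ l (runStart l t) < l (runStart l t - 1) := by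
        rcases Nat.eq_zero_or_pos (runStart l t) with h0 | h0
        · exact Or.inl h0
        · right
          have h1 : l t < l (runStart l t - 1) := (aux_rs_iff l hp t _).mp (by omega)
          have h2 : l (runStart l t) = l t := aux_rs_val l hp t
          omega
      have ih' := ih (runStart l t) (by omega) hbd'
      have hsplit := aux_sum_split (fun j => l j % 2) (show runStart l t ≤ t + 1 by omega)
      rcases Nat.eq_zero_or_pos (l t % 2) with hpar | hpar
      · have hlen : (t + 1 - runStart l t) % 2 = 0 := by
          have h0 : 0 < l t := by omega
          have hev := hm (l t) h0 (Nat.even_iff.mpr hpar)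
          rw [aux_mult_eq l hp hlt, aux_ico_ncard, Nat.even_iff] at hev
          exact hev
        have hzero : ∑ j ∈ Finset.Ico (runStart l t) (t+1), l j % 2 = 0 := by
          apply Finset.sum_eq_zero
          intro i hi
          rw [Finset.mem_Ico] at hi
          rw [hrun i hi.1 (by omega)]
          omega
        have hO : Osum l (t+1) = Osum l (runStart l t) := by
          rw [Osum, hsplit, hzero]; rfl
        omega
      · have hone : ∑ j ∈ Finset.Ico (runStart l t) (t+1), l j % 2 = t + 1 - runStart l t := by
          have hc : ∀ i ∈ Finset.Ico (runStart l t) (t+1), l i % 2 = 1 := by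
            intro i hi
            rw [Finset.mem_Ico] at hi
            rw [hrun i hi.1 (by omega)]
            omega
          rw [Finset.sum_congr rfl hc, Finset.sum_const, Nat.card_Ico, smul_eq_mul, mul_one]
        have hO : Osum l (t+1) = Osum l (runStart l t) + (t + 1 - runStart l t) := by
          rw [Osum, hsplit, hone]; rfl
        omega

lemma aux_odd_parity (l : ℕ → ℕ) (hp : IsPartition l)
    (hm : ∀ a : ℕ, 0 < a → Even a → Even ({i | l i = a}.ncard))
    {j : ℕ} (ho : l j % 2 = 1) : j % 2 = Osum l j % 2 := by
  have hsle : runStart l j ≤ j := aux_rs_le l hp j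
  have hbd : runStart l j = 0 ∨ l (runStart l j) < l (runStart l j - 1) := by
    rcases Nat.eq_zero_or_pos (runStart l j) with h0 | h0
    · exact Or.inl h0
    · right
      have h1 : l j < l (runStart l j - 1) := (aux_rs_iff l hp j _).mp (by omega)
      have h2 : l (runStart l j) = l j := aux_rs_val l hp j
      omega
  have hkey := aux_key l hp hm (runStart l j) hbd
  have hsplit := aux_sum_split (fun j => l j % 2) hsle
  have hone : ∑ i ∈ Finset.Ico (runStart l j) j, l i % 2 = j - runStart l j := by
    have hc : ∀ i ∈ Finset.Ico (runStart l j) j, l i % 2 = 1 := by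
      intro i hi
      rw [Finset.mem_Ico] at hi
      rw [aux_run_const l hp hi.1 (le_of_lt hi.2)]
      exact ho
    rw [Finset.sum_congr rfl hc, Finset.sum_const, Nat.card_Ico, smul_eq_mul, mul_one]
  have hO : Osum l j = Osum l (runStart l j) + (j - runStart l j) := by
    rw [Osum, hsplit, hone]; rfl
  omega
lemma aux_spec (l : ℕ → ℕ) (hp : IsPartition l) (j : ℕ) :
    (j % 2 = 0 → l j ≤ 2 * hphiB l j + 2 ∧ 2 * hphiB l j ≤ l j) ∧
    (j % 2 = 1 → l j ≤ 2 * hphiB l j ∧ 2 * hphiB l j ≤ l j + 2) ∧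
    (l j % 2 = 1 → (j % 2 = 0 → 2 * hphiB l j + 1 = l j) ∧
      (j % 2 = 1 → 2 * hphiB l j = l j + 1)) := by
  have hsle := aux_rs_le l hp j
  unfold hphiB
  split_ifs <;> simp only [Nat.odd_iff, Nat.even_iff] at * <;> omega

lemma aux_congr (l : ℕ → ℕ) (hp : IsPartition l) {i j : ℕ} (hv : l i = l j)
    (hpar : i % 2 = j % 2) : hphiB l i = hphiB l j := by
  have hr : runStart l i = runStart l j := aux_rs_congr l hv
  have h1 := aux_rs_le l hp i
  have h2 := aux_rs_le l hp j
  unfold hphiB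
  rw [hv, hr]
  split_ifs <;> simp only [Nat.even_iff, Nat.odd_iff] at * <;> omega

lemma aux_quasi (l : ℕ → ℕ) (hp : IsPartition l) : IsQuasiPartition (hphiB l) := by
  intro j
  have hle : l (j+2) ≤ l j := le_trans (hp (j+1)) (hp j)
  rcases eq_or_lt_of_le hle with heq | hlt
  · exact le_of_eq (aux_congr l hp heq (by omega))
  · obtain ⟨A1, A2, A3⟩ := aux_spec l hp j
    obtain ⟨B1, B2, B3⟩ := aux_spec l hp (j+2)
    rcases Nat.even_or_odd j with hj | hj
    · have hj0 : j % 2 = 0 := Nat.even_iff.mp hj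
      have a1 := A1 hj0
      have b1 := B1 (by omega)
      rcases Nat.eq_zero_or_pos (l j % 2) with e1 | e1
      · rcases Nat.eq_zero_or_pos (l (j+2) % 2) with e2 | e2
        · omega
        · have hb := (B3 (by omega)).1 (by omega)
          omega
      · have ha := (A3 (by omega)).1 hj0
        rcases Nat.eq_zero_or_pos (l (j+2) % 2) with e2 | e2
        · omega
        · have hb := (B3 (by omega)).1 (by omega)
          omega
    · have hj1 : j % 2 = 1 := Nat.odd_iff.mp hj
      have a1 := A2 hj1
      have b1 := B2 (by omega)
      rcases Nat.eq_zero_or_pos (l j % 2) with e1 | e1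
      · rcases Nat.eq_zero_or_pos (l (j+2) % 2) with e2 | e2
        · omega
        · have hb := (B3 (by omega)).2 (by omega)
          omega
      · have ha := (A3 (by omega)).2 hj1
        rcases Nat.eq_zero_or_pos (l (j+2) % 2) with e2 | e2
        · omega
        · have hb := (B3 (by omega)).2 (by omega)
          omega
lemma aux_rs_zero (l : ℕ → ℕ) (N0 : ℕ) (hz : ∀ i, N0 ≤ i → l i = 0)
    (hpos : ∀ i, i < N0 → 0 < l i) : ∀ j, l j = 0 → runStart l j = N0 := by
  intro j hj
  have hset : {i | l j < l i} = Set.Iio N0 := by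
    ext i
    simp only [Set.mem_setOf_eq, Set.mem_Iio, hj]
    constructor
    · intro hlt
      by_contra hc
      push_neg at hc
      rw [hz i hc] at hlt
      omega
    · intro hlt
      exact hpos i hlt
  rw [runStart, hset, ← Finset.coe_range, Set.ncard_coe_finset, Finset.card_range]

lemma aux_fzero (l : ℕ → ℕ) (N0 : ℕ) (hz : ∀ i, N0 ≤ i → l i = 0)
    (hpos : ∀ i, i < N0 → 0 < l i) (hodd : N0 % 2 = 1) :
    ∀ j, N0 ≤ j → hphiB l j = 0 := by
  intro j hj
  have hlj : l j = 0 := hz j hj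
  unfold hphiB
  rw [aux_rs_zero l N0 hz hpos j hlj, hlj]
  simp [Nat.odd_iff, hodd]

noncomputable def pendAux (l : ℕ → ℕ) (k : ℕ) : ℕ :=
  if 0 < l k ∧ l k % 2 = 0 ∧ runStart l k % 2 = 0 ∧ (k - runStart l k) % 2 = 1 then 1 else 0

lemma pendAux_zero (l : ℕ → ℕ) (k : ℕ)
    (h : ¬(0 < l k ∧ l k % 2 = 0 ∧ runStart l k % 2 = 0 ∧ (k - runStart l k) % 2 = 1)) :
    pendAux l k = 0 := by unfold pendAux; exact if_neg h

lemma pendAux_one (l : ℕ → ℕ) (k : ℕ)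
    (h : 0 < l k ∧ l k % 2 = 0 ∧ runStart l k % 2 = 0 ∧ (k - runStart l k) % 2 = 1) :
    pendAux l k = 1 := by unfold pendAux; exact if_pos h

lemma pendAux_cases (l : ℕ → ℕ) (k : ℕ) :
    pendAux l k = 0 ∨ (pendAux l k = 1 ∧ 0 < l k ∧ l k % 2 = 0 ∧
      runStart l k % 2 = 0 ∧ (k - runStart l k) % 2 = 1) := by
  unfold pendAux
  split_ifs with h
  · exact Or.inr ⟨rfl, h⟩
  · exact Or.inl rfl

lemma aux_main (l : ℕ → ℕ) (hp : IsPartition l)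
    (hm : ∀ a : ℕ, 0 < a → Even a → Even ({i | l i = a}.ncard))
    (N0 : ℕ) (hz : ∀ i, N0 ≤ i → l i = 0) (hpos : ∀ i, i < N0 → 0 < l i)
    (hodd : N0 % 2 = 1) :
    ∀ k, psum l k = 2 * psum (hphiB l) k + Osum l k % 2 + 2 * pendAux l k := by
  intro k
  induction k with
  | zero =>
    have hp0 : pendAux l 0 = 0 := by
      apply pendAux_zero
      have := aux_rs_le l hp 0
      rintro ⟨-, -, -, h4⟩
      omega
    simp [psum, Osum, hp0]
  | succ k ih =>
    have hps : psum l (k+1) = psum l k + l k := by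
      unfold psum; exact Finset.sum_range_succ _ _
    have hpf : psum (hphiB l) (k+1) = psum (hphiB l) k + hphiB l k := by
      unfold psum; exact Finset.sum_range_succ _ _
    have hOs : Osum l (k+1) = Osum l k + l k % 2 := by
      unfold Osum; exact Finset.sum_range_succ _ _
    have hsle := aux_rs_le l hp k
    have hsle1 := aux_rs_le l hp (k+1)
    -- if pendAux (k+1) = 1 then the run continues backwards
    have hcont : pendAux l (k+1) = 1 →
        l (k+1) = l k ∧ runStart l (k+1) = runStart l k := by
      intro h1
      rcases pendAux_cases l (k+1) with h | ⟨-, hc1, hc2, hc3, hc4⟩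
      · omega
      · have hsk : runStart l (k+1) ≤ k := by omega
        have hv : l (k+1) = l k := (aux_run_const l hp hsk (by omega)).symm
        exact ⟨hv, (aux_rs_congr l hv)⟩
    rcases Nat.eq_zero_or_pos (l k) with hk0 | hkpos
    · -- l k = 0
      have hN0k : N0 ≤ k := by
        by_contra hc
        have := hpos k (by omega)
        omega
      have hfk : hphiB l k = 0 := aux_fzero l N0 hz hpos hodd k hN0k
      have hpk : pendAux l k = 0 := pendAux_zero l k (by rintro ⟨h1, -⟩; omega)
      have hpk1 : pendAux l (k+1) = 0 := pendAux_zero l (k+1) (by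
        rintro ⟨h1, -⟩
        have := hp k
        omega)
      omega
    · rcases Nat.eq_zero_or_pos (l k % 2) with hpar | hpar
      · -- l k even positive
        rcases Nat.eq_zero_or_pos (runStart l k % 2) with hse | hso
        · rcases Nat.eq_zero_or_pos ((k - runStart l k) % 2) with hoffe | hoffo
          · -- s even, offset even : f = l k / 2 - 1, run continues
            have hfk : 2 * hphiB l k + 2 = l k := by
              unfold hphiB
              rw [if_neg (by simp only [Nat.odd_iff]; omega),
                if_neg (by simp only [Nat.odd_iff]; omega),
                if_pos (Nat.even_iff.mpr hoffe)]
              omega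
            have hv : l (k+1) = l k := aux_run_continue l hp hm hkpos hpar hoffe
            have hr : runStart l (k+1) = runStart l k := aux_rs_congr l hv
            have hpk : pendAux l k = 0 := pendAux_zero l k (by rintro ⟨-, -, -, h4⟩; omega)
            have hpk1 : pendAux l (k+1) = 1 := pendAux_one l (k+1)
              ⟨by omega, by omega, by omega, by omega⟩
            omega
          · -- s even, offset odd : f = l k / 2 + 1
            have hfk : 2 * hphiB l k = l k + 2 := by
              unfold hphiB
              rw [if_neg (by simp only [Nat.odd_iff]; omega),
                if_neg (by simp only [Nat.odd_iff]; omega),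
                if_neg (by simp only [Nat.even_iff]; omega)]
              omega
            have hpk : pendAux l k = 1 := pendAux_one l k ⟨hkpos, hpar, hse, by omega⟩
            have hpk1 : pendAux l (k+1) = 0 := by
              rcases pendAux_cases l (k+1) with h | ⟨h1, -, -, -, h4⟩
              · exact h
              · obtain ⟨hv, hr⟩ := hcont h1
                omega
            omega
        · -- s odd : f = l k / 2
          have hfk : 2 * hphiB l k = l k := by
            unfold hphiB
            rw [if_neg (by simp only [Nat.odd_iff]; omega),
              if_pos (Nat.odd_iff.mpr (by omega))]
            omega
          have hpk : pendAux l k = 0 := pendAux_zero l k (by rintro ⟨-, -, h3, -⟩; omega)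
          have hpk1 : pendAux l (k+1) = 0 := by
            rcases pendAux_cases l (k+1) with h | ⟨h1, -, -, h3, -⟩
            · exact h
            · obtain ⟨hv, hr⟩ := hcont h1
              omega
          omega
      · -- l k odd
        obtain ⟨-, -, S3⟩ := aux_spec l hp k
        have hS := S3 (by omega)
        have hop : k % 2 = Osum l k % 2 := aux_odd_parity l hp hm (by omega)
        have hpk : pendAux l k = 0 := pendAux_zero l k (by rintro ⟨-, h2, -⟩; omega)
        have hpk1 : pendAux l (k+1) = 0 := by
          rcases pendAux_cases l (k+1) with h | ⟨h1, -, h2, -, -⟩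
          · exact h
          · obtain ⟨hv, -⟩ := hcont h1
            omega
        rcases Nat.eq_zero_or_pos (k % 2) with hkp | hkp
        · have := hS.1 hkp
          omega
        · have := hS.2 (by omega)
          omega
/-- for `λ ∈ P^B_{2n+1}`, `Φ̂^B(λ)` is a quasi-partition of `n`
whose associated bipartition is B-distinguished. -/
theorem hphiB_mem_QB (n : ℕ) (l : ℕ → ℕ) (h : IsPBN n l) :
    IsQuasiPartition (hphiB l) ∧ IsComposition n (hphiB l) ∧
      QB (fun j => hphiB l (2 * j)) (fun j => hphiB l (2 * j + 1)) := by
  obtain ⟨hp, ⟨N, hNz, hNs⟩, hm⟩ := h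
  have hlN : l N = 0 := hNz N le_rfl
  have hposiff : ∀ i, i < runStart l N ↔ 0 < l i := by
    intro i
    rw [aux_rs_iff l hp N i, hlN]
  have hzero : ∀ i, runStart l N ≤ i → l i = 0 := by
    intro i hi
    by_contra hc
    have := (hposiff i).mpr (Nat.pos_of_ne_zero hc)
    omega
  have hpos : ∀ i, i < runStart l N → 0 < l i := fun i hi => (hposiff i).mp hi
  have hN0N : runStart l N ≤ N := aux_rs_le l hp N
  have hsum0 : psum l (runStart l N) = 2 * n + 1 := by
    have hsplit := aux_sum_split l hN0N
    have hz2 : ∑ i ∈ Finset.Ico (runStart l N) N, l i = 0 :=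
      Finset.sum_eq_zero fun i hi => hzero i (Finset.mem_Ico.mp hi).1
    unfold psum at hNs ⊢
    omega
  have hN0pos : 0 < runStart l N := by
    by_contra hc
    have h0 : runStart l N = 0 := by omega
    rw [h0] at hsum0
    unfold psum at hsum0
    simp at hsum0
  have hN0odd : runStart l N % 2 = 1 := by
    have hbd : runStart l N = 0 ∨ l (runStart l N) < l (runStart l N - 1) := by
      right
      have h1 : 0 < l (runStart l N - 1) := hpos _ (by omega)
      have h2 : l (runStart l N) = 0 := hzero _ le_rfl
      omega
    have hkey := aux_key l hp hm (runStart l N) hbd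
    have hpar := aux_psum_parity l (runStart l N)
    omega
  refine ⟨aux_quasi l hp, ?_, ?_⟩
  · -- composition
    refine ⟨runStart l N, aux_fzero l (runStart l N) hzero hpos hN0odd, ?_⟩
    have hmain := aux_main l hp hm (runStart l N) hzero hpos hN0odd (runStart l N)
    have hpN0 : pendAux l (runStart l N) = 0 := pendAux_zero l _ (by
      rintro ⟨h1, -⟩
      have := hzero _ le_rfl
      omega)
    have hpar := aux_psum_parity l (runStart l N)
    omega
  · -- QB
    intro i
    obtain ⟨A1, A2, -⟩ := aux_spec l hp (2*i)
    obtain ⟨B1, B2, -⟩ := aux_spec l hp (2*i+1)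
    obtain ⟨C1, C2, -⟩ := aux_spec l hp (2*i+2)
    have ha := A1 (by omega)
    have hb := B2 (by omega)
    have hc := C1 (by omega)
    have h1 : l (2*i+1) ≤ l (2*i) := hp _
    have h2 : l (2*i+2) ≤ l (2*i+1) := hp _
    constructor
    · show hphiB l (2*i+1) ≤ hphiB l (2*i) + 2
      omega
    · show hphiB l (2*(i+1)) ≤ hphiB l (2*i+1)
      rw [show 2*(i+1) = 2*i+2 by ring]
      omega
end
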